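/- Let α, β, γ, δ, ζ, η > 0 with α+β+γ = π/2 and δ+ζ+η = π/2, set w₁ = exp(2iα), w₂ = exp(2iβ), w₃ = exp(2iγ), w₄ = exp(2iδ), w₅ = exp(2iζ), w₆ = exp(2iη), and let z₂ be a complex number of modulus one with z₄ = w₁z₂, z₆ = w₂z₄, z₈ = w₃z₆, z₁₀ = w₄z₈, z₁₂ = w₅z₁₀. Then all denominators below are nonzero and the three cross ratios satisfy: ((z₂−z₄)(z₆−z₁₀))/((z₂−z₁₀)(z₆−z₄)) = ((1−w₁)(1−w₃w₄))/((1+w₄)(1+w₁w₃)); ((z₆−z₈)(z₁₀−z₂))/((z₆−z₂)(z₁₀−z₈)) = ((1−w₃)(1−w₅w₆))/((1+w₃)(1+w₅w₆)); ((z₁₂−z₂)(z₄−z₈))/((z₁₂−z₈)(z₄−z₂)) = ((1−w₆)(1−w₂w₃))/((1+w₆)(1+w₂w₃)). [Lemma 7.5 of the paper, computing the Lie curvatures Ψ_ν at the points p¹, p⁵, p¹¹ of the dodecagon.] -/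

import Mathlib

open Real Complex

lemma exp_two_I (x : ℝ) :
    Complex.exp (2 * Complex.I * (x : ℂ)) = Complex.exp (((2 * x : ℝ) : ℂ) * Complex.I) := by
  push_cast; ring_nf

lemma exp_mul_I_add (a b : ℝ) :
    Complex.exp (((a : ℝ) : ℂ) * Complex.I) * Complex.exp (((b : ℝ) : ℂ) * Complex.I)
      = Complex.exp (((a + b : ℝ) : ℂ) * Complex.I) := by
  rw [← Complex.exp_add]; push_cast; ring_nf

lemma exp_ne_aux {t : ℝ} (h0 : 0 < t) (h1 : t < π) :
    Complex.exp ((t : ℂ) * Complex.I) ≠ 1 ∧ Complex.exp ((t : ℂ) * Complex.I) ≠ -1 := by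
  have hs : 0 < Real.sin t := Real.sin_pos_of_pos_of_lt_pi h0 h1
  constructor <;> intro h <;>
    simpa [Complex.exp_ofReal_mul_I_im, hs.ne'] using congrArg Complex.im h

theorem dodecagon_cross_ratios
    (α β γ δ ζ η : ℝ)
    (hα : 0 < α) (hβ : 0 < β) (hγ : 0 < γ) (hδ : 0 < δ) (hζ : 0 < ζ) (hη : 0 < η)
    (habc : α + β + γ = π / 2) (hdef : δ + ζ + η = π / 2)
    (w₁ w₂ w₃ w₄ w₅ w₆ : ℂ)
    (hw₁ : w₁ = Complex.exp (2 * Complex.I * (α : ℂ)))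
    (hw₂ : w₂ = Complex.exp (2 * Complex.I * (β : ℂ)))
    (hw₃ : w₃ = Complex.exp (2 * Complex.I * (γ : ℂ)))
    (hw₄ : w₄ = Complex.exp (2 * Complex.I * (δ : ℂ)))
    (hw₅ : w₅ = Complex.exp (2 * Complex.I * (ζ : ℂ)))
    (hw₆ : w₆ = Complex.exp (2 * Complex.I * (η : ℂ)))
    (z₂ z₄ z₆ z₈ z₁₀ z₁₂ : ℂ) (hz₂ : ‖z₂‖ = 1)
    (hz₄ : z₄ = w₁ * z₂) (hz₆ : z₆ = w₂ * z₄) (hz₈ : z₈ = w₃ * z₆)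
    (hz₁₀ : z₁₀ = w₄ * z₈) (hz₁₂ : z₁₂ = w₅ * z₁₀) :
    ((z₂ - z₁₀) * (z₆ - z₄) ≠ 0 ∧ (1 + w₄) * (1 + w₁ * w₃) ≠ 0 ∧
      ((z₂ - z₄) * (z₆ - z₁₀)) / ((z₂ - z₁₀) * (z₆ - z₄)) =
        ((1 - w₁) * (1 - w₃ * w₄)) / ((1 + w₄) * (1 + w₁ * w₃))) ∧
    ((z₆ - z₂) * (z₁₀ - z₈) ≠ 0 ∧ (1 + w₃) * (1 + w₅ * w₆) ≠ 0 ∧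
      ((z₆ - z₈) * (z₁₀ - z₂)) / ((z₆ - z₂) * (z₁₀ - z₈)) =
        ((1 - w₃) * (1 - w₅ * w₆)) / ((1 + w₃) * (1 + w₅ * w₆))) ∧
    ((z₁₂ - z₈) * (z₄ - z₂) ≠ 0 ∧ (1 + w₆) * (1 + w₂ * w₃) ≠ 0 ∧
      ((z₁₂ - z₂) * (z₄ - z₈)) / ((z₁₂ - z₈) * (z₄ - z₂)) =
        ((1 - w₆) * (1 - w₂ * w₃)) / ((1 + w₆) * (1 + w₂ * w₃))) := by
  have hπ := Real.pi_pos
  have hz0 : z₂ ≠ 0 := by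
    intro h; rw [h] at hz₂; simp at hz₂
  rw [exp_two_I] at hw₁ hw₂ hw₃ hw₄ hw₅ hw₆
  have hw1z : w₁ ≠ 0 := by rw [hw₁]; exact Complex.exp_ne_zero _
  have hw2z : w₂ ≠ 0 := by rw [hw₂]; exact Complex.exp_ne_zero _
  have hw4z : w₄ ≠ 0 := by rw [hw₄]; exact Complex.exp_ne_zero _
  have hw5z : w₅ ≠ 0 := by rw [hw₅]; exact Complex.exp_ne_zero _
  have hprod₁ : w₁ * w₂ * w₃ = -1 := by
    rw [hw₁, hw₂, hw₃, exp_mul_I_add, exp_mul_I_add]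
    have h : 2 * α + 2 * β + 2 * γ = π := by linarith
    rw [h, Complex.exp_pi_mul_I]
  have hprod₂ : w₄ * w₅ * w₆ = -1 := by
    rw [hw₄, hw₅, hw₆, exp_mul_I_add, exp_mul_I_add]
    have h : 2 * δ + 2 * ζ + 2 * η = π := by linarith
    rw [h, Complex.exp_pi_mul_I]
  -- generic "not ±1" facts
  have K : ∀ (a : ℂ) (t : ℝ), a = Complex.exp ((t : ℂ) * Complex.I) → 0 < t → t < π →
      a ≠ 1 ∧ a ≠ -1 := by
    rintro a t rfl h0 h1; exact exp_ne_aux h0 h1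
  obtain ⟨hw1ne1, hw1nem⟩ := K w₁ (2*α) hw₁ (by linarith) (by linarith)
  obtain ⟨hw2ne1, hw2nem⟩ := K w₂ (2*β) hw₂ (by linarith) (by linarith)
  obtain ⟨hw3ne1, hw3nem⟩ := K w₃ (2*γ) hw₃ (by linarith) (by linarith)
  obtain ⟨hw4ne1, hw4nem⟩ := K w₄ (2*δ) hw₄ (by linarith) (by linarith)
  obtain ⟨hw6ne1, hw6nem⟩ := K w₆ (2*η) hw₆ (by linarith) (by linarith)
  obtain ⟨hw13ne1, hw13nem⟩ := K (w₁ * w₃) (2*α + 2*γ)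
    (by rw [hw₁, hw₃, exp_mul_I_add]) (by linarith) (by linarith)
  obtain ⟨hw12ne1, hw12nem⟩ := K (w₁ * w₂) (2*α + 2*β)
    (by rw [hw₁, hw₂, exp_mul_I_add]) (by linarith) (by linarith)
  obtain ⟨hw56ne1, hw56nem⟩ := K (w₅ * w₆) (2*ζ + 2*η)
    (by rw [hw₅, hw₆, exp_mul_I_add]) (by linarith) (by linarith)
  obtain ⟨hw45ne1, hw45nem⟩ := K (w₄ * w₅) (2*δ + 2*ζ)
    (by rw [hw₄, hw₅, exp_mul_I_add]) (by linarith) (by linarith)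
  obtain ⟨hw23ne1, hw23nem⟩ := K (w₂ * w₃) (2*β + 2*γ)
    (by rw [hw₂, hw₃, exp_mul_I_add]) (by linarith) (by linarith)
  -- 1 ± a ≠ 0 facts
  have onep : ∀ (a : ℂ), a ≠ -1 → 1 + a ≠ 0 := by
    intro a h hc; exact h (by linear_combination hc)
  have onem : ∀ (a : ℂ), a ≠ 1 → 1 - a ≠ 0 := by
    intro a h hc; exact h (by linear_combination -hc)
  have subm : ∀ (a : ℂ), a ≠ 1 → a - 1 ≠ 0 := by
    intro a h hc; exact h (by linear_combination hc)
  -- explicit z values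
  have h8 : z₈ = -z₂ := by
    rw [hz₈, hz₆, hz₄]; linear_combination z₂ * hprod₁
  have h10 : z₁₀ = -(w₄ * z₂) := by
    rw [hz₁₀, h8]; ring
  have h12 : z₁₂ = -(w₄ * w₅ * z₂) := by
    rw [hz₁₂, h10]; ring
  have h6 : z₆ = w₁ * w₂ * z₂ := by rw [hz₆, hz₄]; ring
  -- inverse forms
  have hw3' : w₃ = -(w₁ * w₂)⁻¹ := by
    field_simp
    linear_combination hprod₁
  have hw6' : w₆ = -(w₄ * w₅)⁻¹ := by
    field_simp
    linear_combination hprod₂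
  have hdL1 : (z₂ - z₁₀) * (z₆ - z₄) ≠ 0 := by
    have e1 : z₂ - z₁₀ = z₂ * (1 + w₄) := by rw [h10]; ring
    have e2 : z₆ - z₄ = w₁ * z₂ * (w₂ - 1) := by rw [h6, hz₄]; ring
    rw [e1, e2]
    exact mul_ne_zero (mul_ne_zero hz0 (onep _ hw4nem))
      (mul_ne_zero (mul_ne_zero hw1z hz0) (subm _ hw2ne1))
  have hdR1 : (1 + w₄) * (1 + w₁ * w₃) ≠ 0 :=
    mul_ne_zero (onep _ hw4nem) (onep _ hw13nem)
  have hdL2 : (z₆ - z₂) * (z₁₀ - z₈) ≠ 0 := by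
    have e1 : z₆ - z₂ = z₂ * (w₁ * w₂ - 1) := by rw [h6]; ring
    have e2 : z₁₀ - z₈ = z₂ * (1 - w₄) := by rw [h10, h8]; ring
    rw [e1, e2]
    exact mul_ne_zero (mul_ne_zero hz0 (subm _ hw12ne1)) (mul_ne_zero hz0 (onem _ hw4ne1))
  have hdR2 : (1 + w₃) * (1 + w₅ * w₆) ≠ 0 :=
    mul_ne_zero (onep _ hw3nem) (onep _ hw56nem)
  have hdL3 : (z₁₂ - z₈) * (z₄ - z₂) ≠ 0 := by
    have e1 : z₁₂ - z₈ = z₂ * (1 - w₄ * w₅) := by rw [h12, h8]; ring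
    have e2 : z₄ - z₂ = z₂ * (w₁ - 1) := by rw [hz₄]; ring
    rw [e1, e2]
    exact mul_ne_zero (mul_ne_zero hz0 (onem _ hw45ne1)) (mul_ne_zero hz0 (subm _ hw1ne1))
  have hdR3 : (1 + w₆) * (1 + w₂ * w₃) ≠ 0 :=
    mul_ne_zero (onep _ hw6nem) (onep _ hw23nem)
  refine ⟨⟨hdL1, hdR1, ?_⟩, ⟨hdL2, hdR2, ?_⟩, ⟨hdL3, hdR3, ?_⟩⟩
  · rw [div_eq_div_iff hdL1 hdR1, h6, hz₄, h10, hw3']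
    field_simp
    ring
  · rw [div_eq_div_iff hdL2 hdR2, h6, h8, h10, hw3', hw6']
    field_simp
    ring
  · rw [div_eq_div_iff hdL3 hdR3, h12, h8, hz₄, hw3', hw6']
    field_simp
    ring
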